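/- arXiv:2102.01047 — 2 statements merged into one kernel-verified Lean document; each statement's English description precedes it below -/
import Mathlib

section
/- Let F : [0,1] → ℝ be continuously differentiable with F(0) = F(1) = 0, F(w) > 0 for all w ∈ (0,1), F'(0) = 1, F(w) ≤ w for all w ∈ (0,1], F'(1) < 0, and limsup_{w↓0} (1 - F'(w))/w < ∞. Then there exists n ∈ ℕ such that G_n(x) := ((1-x)/n)·(1-(1-x)^n) ≤ F(x) for all x ∈ [0,1]. -/
open Set

lemma stmt4_pow_lower (n : ℕ) {x : ℝ} (h0 : 0 ≤ x) (h1 : x ≤ 1) :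
    1 - n*x + (n*(n-1)/2)*x^2 - (n*(n-1)*(n-2)/6)*x^3 ≤ (1-x)^n := by
  induction n with
  | zero => norm_num
  | succ n ih =>
    have hb : (0:ℝ) ≤ (n:ℝ)*((n:ℝ)-1)*((n:ℝ)-2) := by
      rcases n with _|_|n
      · norm_num
      · norm_num
      · push_cast
        nlinarith [Nat.cast_nonneg (α := ℝ) n, sq_nonneg ((n:ℝ))]
    have h2 : (0:ℝ) ≤ 1 - x := by linarith
    have h3 := mul_le_mul_of_nonneg_left ih h2
    have h4 : (1-x)^(n+1) = (1-x) * (1-x)^n := by ring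
    have key : (1-x) * (1 - (n:ℝ)*x + ((n:ℝ)*((n:ℝ)-1)/2)*x^2 - ((n:ℝ)*((n:ℝ)-1)*((n:ℝ)-2)/6)*x^3)
        = (1 - ((n:ℝ)+1)*x + (((n:ℝ)+1)*(n:ℝ)/2)*x^2 - (((n:ℝ)+1)*(n:ℝ)*((n:ℝ)-1)/6)*x^3)
          + ((n:ℝ)*((n:ℝ)-1)*((n:ℝ)-2)/6)*x^4 := by ring
    have h5 : (0:ℝ) ≤ ((n:ℝ)*((n:ℝ)-1)*((n:ℝ)-2)/6)*x^4 :=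
      mul_nonneg (by linarith) (pow_nonneg h0 4)
    push_cast
    rw [h4]
    linarith

lemma stmt4_coef_nonneg (n : ℕ) : (0:ℝ) ≤ ((n:ℝ)-1)*((n:ℝ)-2) := by
  rcases n with _|_|k
  · norm_num
  · norm_num
  · push_cast
    nlinarith [Nat.cast_nonneg (α := ℝ) k]

set_option maxHeartbeats 1000000 in
lemma stmt4_poly_final (N C x : ℝ) (hC : 1 ≤ C) (hnC : 3*C+1 ≤ N)
    (hx0 : 0 ≤ x) (hx2n : x ≤ 2/N) :
    x - ((N-1)/2)*x^2 + ((N-1)*(N-2)/6)*x^3 ≤ x - (C/2)*x^2 := by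
  have hN4 : 4 ≤ N := by linarith
  have hN : 0 < N := by linarith
  have hx3 : x^3 ≤ (2/N)*x^2 := by
    calc x^3 = x*x^2 := by ring
      _ ≤ (2/N)*x^2 := mul_le_mul_of_nonneg_right hx2n (sq_nonneg x)
  have hc6 : 0 ≤ (N-1)*(N-2)/6 := by nlinarith
  have t1 : ((N-1)*(N-2)/6)*x^3 ≤ ((N-1)*(N-2)/6)*((2/N)*x^2) :=
    mul_le_mul_of_nonneg_left hx3 hc6
  have t2 : ((N-1)*(N-2)/6)*(2/N) ≤ (N-1)/3 := by
    rw [div_mul_div_comm, div_le_div_iff₀ (by linarith) (by norm_num : (0:ℝ) < 3)]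
    nlinarith
  have t3 : (((N-1)*(N-2)/6)*(2/N))*x^2 ≤ ((N-1)/3)*x^2 :=
    mul_le_mul_of_nonneg_right t2 (sq_nonneg x)
  have t4 : ((N-1)/3)*x^2 ≤ ((N-1)/2 - C/2)*x^2 :=
    mul_le_mul_of_nonneg_right (by linarith) (sq_nonneg x)
  nlinarith [t1, t3, t4]

lemma stmt4_half_bound (C x : ℝ) (h : C*x ≤ 1) (hx : 0 ≤ x) :
    x/2 ≤ x - (C/2)*x^2 := by
  nlinarith [mul_le_mul_of_nonneg_right h hx]

set_option maxHeartbeats 2000000 in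
/-- for any nonlinearity F satisfying the standard conditions (SC),
there is some n with G_n ≤ F on [0,1]. -/
theorem stmt4 (F F' : ℝ → ℝ)
    (hderiv : ∀ x ∈ Set.Icc (0:ℝ) 1, HasDerivWithinAt F (F' x) (Set.Icc 0 1) x)
    (hcont : ContinuousOn F' (Set.Icc 0 1))
    (hF0 : F 0 = 0) (hF1 : F 1 = 0)
    (hFpos : ∀ w ∈ Set.Ioo (0:ℝ) 1, 0 < F w)
    (hF'0 : F' 0 = 1)
    (hFle : ∀ w ∈ Set.Ioc (0:ℝ) 1, F w ≤ w)
    (hF'1 : F' 1 < 0)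
    (hlimsup : ∃ C : ℝ, ∀ᶠ w in nhdsWithin 0 (Set.Ioi 0), (1 - F' w)/w ≤ C) :
    ∃ n : ℕ, 1 ≤ n ∧ ∀ x ∈ Set.Icc (0:ℝ) 1, ((1 - x)/(n:ℝ)) * (1 - (1 - x)^n) ≤ F x := by
  have hFc : ContinuousOn F (Icc (0:ℝ) 1) := fun x hx => (hderiv x hx).continuousWithinAt
  obtain ⟨C0, hC0⟩ := hlimsup
  set C := max C0 1 with hCdef
  have hC1 : (1:ℝ) ≤ C := le_max_right _ _
  have hCpos : (0:ℝ) < C := lt_of_lt_of_le one_pos hC1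
  rw [eventually_nhdsWithin_iff, Metric.eventually_nhds_iff] at hC0
  obtain ⟨ε, hε, hεb⟩ := hC0
  have hd0 : ∀ w : ℝ, 0 < w → w < ε → 1 - C*w ≤ F' w := by
    intro w hw hwε
    have h1 : dist w 0 < ε := by rwa [Real.dist_eq, sub_zero, abs_of_pos hw]
    have h2 := hεb h1 hw
    have h3 : 1 - F' w ≤ C0 * w := by rwa [div_le_iff₀ hw] at h2
    have h4 : C0 ≤ C := le_max_left _ _
    nlinarith
  -- near 1 : derivative bound
  set c : ℝ := -F' 1 / 2 with hcdef
  have hcpos : 0 < c := by rw [hcdef]; linarith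
  have h1c : ContinuousWithinAt F' (Icc (0:ℝ) 1) 1 := hcont 1 (by norm_num)
  have hev : ∀ᶠ w in nhdsWithin 1 (Icc (0:ℝ) 1), F' w < F' 1 / 2 :=
    h1c.eventually_lt_const (by linarith)
  rw [eventually_nhdsWithin_iff, Metric.eventually_nhds_iff] at hev
  obtain ⟨ε₁, hε₁, hε₁b⟩ := hev
  set b : ℝ := max (1/2 : ℝ) (1 - ε₁/2) with hbdef
  have hb0 : (0:ℝ) < b := lt_of_lt_of_le (by norm_num) (le_max_left _ _)
  have hb1 : b < 1 := max_lt (by norm_num) (by linarith)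
  have hd1 : ∀ w ∈ Icc b 1, F' w ≤ -c := by
    intro w hw
    have hw1 : w ∈ Icc (0:ℝ) 1 := ⟨le_trans hb0.le hw.1, hw.2⟩
    have hwb : 1 - ε₁/2 ≤ w := le_trans (le_max_right _ _) hw.1
    have hdist : dist w 1 < ε₁ := by
      rw [Real.dist_eq, abs_of_nonpos (by linarith [hw.2])]
      linarith
    have := hε₁b hdist hw1
    rw [hcdef]; linarith
  -- lower bound F x ≥ x - (C/2) x² on [0, a1]
  set a1 : ℝ := min (ε/2) 1 with ha1def
  have ha1 : 0 < a1 := lt_min (by linarith) one_pos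
  have ha1le1 : a1 ≤ 1 := min_le_right _ _
  have hsub01 : Icc (0:ℝ) a1 ⊆ Icc 0 1 := Icc_subset_Icc le_rfl ha1le1
  have hsubI : Ioo (0:ℝ) a1 ⊆ Icc (0:ℝ) 1 := fun y hy => hsub01 (Ioo_subset_Icc_self hy)
  have hlow0 : ∀ x ∈ Icc (0:ℝ) a1, x - (C/2)*x^2 ≤ F x := by
    have hmono : MonotoneOn (fun x => F x - x + (C/2)*x^2) (Icc 0 a1) := by
      apply monotoneOn_of_hasDerivWithinAt_nonneg (convex_Icc _ _)
        (f' := fun x => F' x - 1 + C*x)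
      · exact ((hFc.mono hsub01).sub continuousOn_id).add
          ((continuous_const.mul (continuous_pow 2)).continuousOn)
      · intro x hx
        rw [interior_Icc] at hx
        have hx1 : x ∈ Icc (0:ℝ) 1 := hsubI hx
        have hF := (hderiv x hx1).mono hsubI
        have hid : HasDerivWithinAt (fun y : ℝ => y) 1 (Ioo (0:ℝ) a1) x :=
          hasDerivWithinAt_id x _
        have hsq0 := (show HasDerivWithinAt (fun x : ℝ => x^2) ((↑(2:ℕ):ℝ) * x^(2-1)) (Ioo (0:ℝ) a1) x from hasDerivWithinAt_pow 2 x).const_mul (C/2)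
        have hsq : HasDerivWithinAt (fun y : ℝ => (C/2)*y^2) ((C/2)*(2*x))
            (Ioo (0:ℝ) a1) x := by
          exact hsq0.congr_deriv (by norm_num)
        have hcomb := (hF.sub hid).add hsq
        rw [interior_Icc]
        exact hcomb.congr_deriv (by ring)
      · intro x hx
        rw [interior_Icc] at hx
        have hxε : x < ε := by
          have := lt_of_lt_of_le hx.2 (min_le_left (ε/2) 1)
          linarith
        have := hd0 x hx.1 hxε
        linarith
    intro x hx
    have h0m : (0:ℝ) ∈ Icc (0:ℝ) a1 := ⟨le_rfl, ha1.le⟩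
    have := hmono h0m hx hx.1
    simp only [hF0] at this
    nlinarith
  -- lower bound F x ≥ c (1-x) on [b, 1]
  have hlow1 : ∀ x ∈ Icc b 1, c*(1-x) ≤ F x := by
    have hsubb1 : Icc b 1 ⊆ Icc (0:ℝ) 1 := Icc_subset_Icc hb0.le le_rfl
    have hsubbI : Ioo b 1 ⊆ Icc (0:ℝ) 1 := fun y hy => hsubb1 (Ioo_subset_Icc_self hy)
    have hanti : AntitoneOn (fun x => F x + c*x) (Icc b 1) := by
      apply antitoneOn_of_hasDerivWithinAt_nonpos (convex_Icc _ _)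
        (f' := fun x => F' x + c)
      · exact (hFc.mono hsubb1).add ((continuous_const.mul continuous_id).continuousOn)
      · intro x hx
        rw [interior_Icc] at hx
        have hF := (hderiv x (hsubbI hx)).mono hsubbI
        have hid0 := (hasDerivWithinAt_id x (Ioo b 1)).const_mul c
        have hid : HasDerivWithinAt (fun y : ℝ => c*y) c (Ioo b 1) x := by
          exact hid0.congr_deriv (mul_one c)
        rw [interior_Icc]
        exact hF.add hid
      · intro x hx
        rw [interior_Icc] at hx
        have := hd1 x (Ioo_subset_Icc_self hx)
        linarith
    intro x hx
    have h1m : (1:ℝ) ∈ Icc b 1 := ⟨hb1.le, le_rfl⟩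
    have := hanti hx h1m hx.2
    simp only [hF1] at this
    nlinarith
  -- middle region minimum
  set a : ℝ := min a1 (min (1/C) (b/2)) with hadef
  have ha : 0 < a := lt_min ha1 (lt_min (by positivity) (by linarith))
  have hab : a ≤ b := le_trans (le_trans (min_le_right _ _) (min_le_right _ _)) (by linarith)
  have haC : a ≤ 1/C := le_trans (min_le_right _ _) (min_le_left _ _)
  have haa1 : a ≤ a1 := min_le_left _ _
  have hsubm : Icc a b ⊆ Icc (0:ℝ) 1 := Icc_subset_Icc ha.le hb1.le
  obtain ⟨z, hz, hzmin⟩ := isCompact_Icc.exists_isMinOn (nonempty_Icc.mpr hab)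
    (hFc.mono hsubm)
  have hFz : 0 < F z := hFpos z ⟨lt_of_lt_of_le ha hz.1, lt_of_le_of_lt hz.2 hb1⟩
  -- choose n
  obtain ⟨n, hn⟩ := exists_nat_ge (max (3*C+1) (max (1/(F z)) (1/c)))
  have hnC : 3*C+1 ≤ (n:ℝ) := le_trans (le_max_left _ _) hn
  have hnm : 1/(F z) ≤ (n:ℝ) := le_trans (le_trans (le_max_left _ _) (le_max_right _ _)) hn
  have hnc : 1/c ≤ (n:ℝ) := le_trans (le_trans (le_max_right _ _) (le_max_right _ _)) hn
  have hN : (0:ℝ) < (n:ℝ) := by linarith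
  have hN1 : (1:ℝ) ≤ (n:ℝ) := by linarith
  have hn1 : 1 ≤ n := by exact_mod_cast hN1
  have h1nm : 1/(n:ℝ) ≤ F z := by rw [div_le_iff₀ hN]; rw [div_le_iff₀ hFz] at hnm; nlinarith
  have h1nc : 1/(n:ℝ) ≤ c := by rw [div_le_iff₀ hN]; rw [div_le_iff₀ hcpos] at hnc; nlinarith
  refine ⟨n, hn1, ?_⟩
  intro x hx
  obtain ⟨hx0, hx1⟩ := hx
  have hu0 : (0:ℝ) ≤ 1 - x := by linarith
  have hu1 : 1 - x ≤ 1 := by linarith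
  have hun0 : (0:ℝ) ≤ (1-x)^n := pow_nonneg hu0 n
  have hun1 : (1-x)^n ≤ 1 := pow_le_one₀ hu0 hu1
  have hG0 : ((1 - x)/(n:ℝ)) * (1 - (1 - x)^n) ≤ (1/(n:ℝ)) * (1 - (1-x)^n) := by
    have h1 : (1 - x)/(n:ℝ) ≤ 1/(n:ℝ) := by gcongr
    exact mul_le_mul_of_nonneg_right h1 (by linarith)
  have hG1 : (1/(n:ℝ)) * (1 - (1-x)^n) ≤ 1/(n:ℝ) :=
    mul_le_of_le_one_right (by positivity) (by linarith)
  by_cases hxb : b ≤ x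
  · -- near 1
    have hstep : ((1 - x)/(n:ℝ)) * (1 - (1 - x)^n) ≤ (1-x)/(n:ℝ) :=
      mul_le_of_le_one_right (by positivity) (by linarith)
    have hstep2 : (1-x)/(n:ℝ) ≤ c*(1-x) := by
      rw [div_eq_mul_one_div]
      calc (1-x)*(1/(n:ℝ)) ≤ (1-x)*c := mul_le_mul_of_nonneg_left h1nc hu0
        _ = c*(1-x) := by ring
    exact le_trans hstep (le_trans hstep2 (hlow1 x ⟨hxb, hx1⟩))
  · push_neg at hxb
    by_cases hxa : a ≤ x
    · -- middle
      have := isMinOn_iff.mp hzmin x ⟨hxa, hxb.le⟩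
      linarith [hG0, hG1, h1nm]
    · push_neg at hxa
      have hxa1 : x ∈ Icc (0:ℝ) a1 := ⟨hx0, le_trans hxa.le haa1⟩
      have hFlow := hlow0 x hxa1
      by_cases hx2n : x ≤ 2/(n:ℝ)
      · -- polynomial estimate
        have hp := stmt4_pow_lower n hx0 hx1
        have h1mun : 1 - (1-x)^n ≤ (n:ℝ)*x - ((n:ℝ)*((n:ℝ)-1)/2)*x^2
            + ((n:ℝ)*((n:ℝ)-1)*((n:ℝ)-2)/6)*x^3 := by linarith [hp]
        have hmul := mul_le_mul_of_nonneg_left h1mun (by positivity : (0:ℝ) ≤ 1/(n:ℝ))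
        have hNne : (n:ℝ) ≠ 0 := ne_of_gt hN
        have heq : (1/(n:ℝ))*((n:ℝ)*x - ((n:ℝ)*((n:ℝ)-1)/2)*x^2
              + ((n:ℝ)*((n:ℝ)-1)*((n:ℝ)-2)/6)*x^3)
            = x - (((n:ℝ)-1)/2)*x^2 + (((n:ℝ)-1)*((n:ℝ)-2)/6)*x^3 := by
          field_simp
        rw [heq] at hmul
        have hfinal : x - (((n:ℝ)-1)/2)*x^2 + (((n:ℝ)-1)*((n:ℝ)-2)/6)*x^3
            ≤ x - (C/2)*x^2 := stmt4_poly_final (n:ℝ) C x hC1 hnC hx0 hx2n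
        linarith [hG0, hmul, hfinal, hFlow]
      · -- 2/n < x
        push_neg at hx2n
        have h1 : 1/(n:ℝ) ≤ x/2 := by
          rw [div_le_div_iff₀ hN (by norm_num : (0:ℝ) < 2)]
          rw [div_lt_iff₀ hN] at hx2n
          linarith
        have hxC : C*x ≤ 1 := by
          have hle : x ≤ 1/C := le_trans hxa.le haC
          rw [le_div_iff₀ hCpos] at hle
          linarith
        have h2 : x/2 ≤ x - (C/2)*x^2 := stmt4_half_bound C x hxC hx0
        linarith [hG0, hG1, hFlow]
end

section
/- Let ξ : ℝ → [0, ∞) be measurable and bounded, let (B_t) be a one-dimensional Brownian motion with law P_x started at x, and define u(t, x) := E_x[exp(∫_0^t ξ(B_r) dr) · 1_{B_t ≤ 0}]. Then for all x ∈ ℝ and all 0 ≤ s ≤ t one has u(s, x) ≤ 2·u(t, x). -/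
open MeasureTheory ProbabilityTheory
open scoped ENNReal NNReal

/-- The family of laws of a one-dimensional Brownian motion started at each point
`x ∈ ℝ`, realized on the space of continuous paths: each `P x` is a probability
measure starting at `x`, with Gaussian increments of variance `t - s` and
independent increments. -/
def IsBrownianMotion (P : ℝ → Measure {f : ℝ → ℝ // Continuous f}) : Prop :=
  (∀ x, IsProbabilityMeasure (P x)) ∧
  (∀ x, ∀ᵐ ω ∂ P x, ω.1 0 = x) ∧
  (∀ x, ∀ s t : ℝ, 0 ≤ s → s ≤ t →
      Measure.map (fun ω : {f : ℝ → ℝ // Continuous f} => ω.1 t - ω.1 s)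
          (P x)
        = gaussianReal 0 (Real.toNNReal (t - s))) ∧
  (∀ x : ℝ, ∀ n : ℕ, ∀ ts : ℕ → ℝ, Monotone ts → 0 ≤ ts 0 →
      iIndepFun
        (fun (i : Fin n) (ω : {f : ℝ → ℝ // Continuous f}) =>
          ω.1 (ts (i.1 + 1)) - ω.1 (ts i.1)) (P x))

namespace Stmt11Aux

abbrev CPath : Type := {f : ℝ → ℝ // Continuous f}

lemma measurable_eval (r : ℝ) : Measurable fun ω : CPath => ω.1 r :=
  (measurable_pi_apply r).comp measurable_subtype_coe

/-- The σ-algebra generated by the evaluations on `[0, s]`. -/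
def Fs (s : ℝ) : MeasurableSpace CPath :=
  ⨆ r : Set.Icc (0:ℝ) s,
    MeasurableSpace.comap (fun ω : CPath => ω.1 r.1) Real.measurableSpace

/-- Measurability of the integral functional with respect to a sub-σ-algebra containing
the evaluations on `[0, s]`. -/
lemma measurable_intFun {m : MeasurableSpace CPath} {s : ℝ} (hs : 0 ≤ s)
    (hev : ∀ r, r ∈ Set.Icc (0:ℝ) s → Measurable[m] fun ω : CPath => ω.1 r)
    {ξ : ℝ → ℝ} (hξm : Measurable ξ) :
    Measurable[m] fun ω : CPath => ∫ r in (0:ℝ)..s, ξ (ω.1 r) := by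
  classical
  set c : ℝ → ℝ := fun r => max 0 (min r s) with hc
  have hc_cont : Continuous c := continuous_const.max (continuous_id.min continuous_const)
  have hc_mem : ∀ r, c r ∈ Set.Icc (0:ℝ) s := fun r =>
    ⟨le_max_left _ _, max_le hs (min_le_right _ _)⟩
  have h_unc := measurable_uncurry_of_continuous_of_measurable (m := m)
      (u := fun (r : ℝ) (ω : CPath) => ω.1 (c r))
      (fun ω => ω.2.comp hc_cont) (fun r => hev (c r) (hc_mem r))
  set F : CPath × ℝ → ℝ :=
    (Prod.snd ⁻¹' Set.Ioc (0:ℝ) s).indicator (fun p => ξ (p.1.1 (c p.2))) with hF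
  have hFmeas : Measurable[m.prod inferInstance] F := by
    refine Measurable.indicator ?_ (measurable_snd measurableSet_Ioc)
    have hswap : Measurable[m.prod inferInstance]
        (fun p : CPath × ℝ => ((p.2, p.1) : ℝ × CPath)) :=
      Measurable.prod measurable_snd measurable_fst
    exact (hξm.comp h_unc).comp hswap
  have hsm : StronglyMeasurable[m] (fun ω : CPath => ∫ r : ℝ, F (ω, r)) :=
    hFmeas.stronglyMeasurable.integral_prod_right'
  have hkey : (fun ω : CPath => ∫ r in (0:ℝ)..s, ξ (ω.1 r))
      = fun ω : CPath => ∫ r : ℝ, F (ω, r) := by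
    funext ω
    have h1 : (fun r : ℝ => F (ω, r))
        = (Set.Ioc (0:ℝ) s).indicator (fun r => ξ (ω.1 (c r))) := by
      funext r
      by_cases hr : r ∈ Set.Ioc (0:ℝ) s
      · rw [hF]
        rw [Set.indicator_of_mem (by exact hr) _, Set.indicator_of_mem hr]
      · rw [hF]
        rw [Set.indicator_of_notMem (by exact hr) _, Set.indicator_of_notMem hr]
    rw [h1, integral_indicator measurableSet_Ioc]
    rw [intervalIntegral.integral_of_le hs]
    refine setIntegral_congr_fun measurableSet_Ioc fun r hr => ?_
    have : c r = r := by
      rw [hc]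
      simp only []
      rw [min_eq_left hr.2, max_eq_right hr.1.le]
    rw [this]
  rw [hkey]
  exact hsm.measurable

lemma indep_finset (P : ℝ → Measure CPath) (hP : IsBrownianMotion P) (x s t : ℝ)
    (hs : 0 ≤ s) (hst : s ≤ t)
    (F : Finset ℝ) (hF : ∀ r ∈ F, r ∈ Set.Icc (0:ℝ) s) :
    Indep (⨆ r ∈ F, MeasurableSpace.comap (fun ω : CPath => ω.1 r) inferInstance)
      (MeasurableSpace.comap (fun ω : CPath => ω.1 t - ω.1 s) inferInstance) (P x) := by
  classical
  set G : Finset ℝ := insert 0 (insert s F) with hG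
  set l : List ℝ := G.sort (· ≤ ·) with hl
  have hl_sorted : l.Pairwise (· ≤ ·) := Finset.pairwise_sort _ _
  have hmem_l : ∀ a ∈ l, 0 ≤ a ∧ a ≤ s := by
    intro a ha
    have ha' : a ∈ G := (Finset.mem_sort _).1 ha
    simp only [hG, Finset.mem_insert] at ha'
    rcases ha' with rfl | rfl | ha'
    · exact ⟨le_rfl, hs⟩
    · exact ⟨hs, le_rfl⟩
    · exact ⟨(hF a ha').1, (hF a ha').2⟩
  set m : ℕ := l.length with hm
  have h0_mem : (0:ℝ) ∈ l := (Finset.mem_sort _).2 (by simp [hG])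
  have hs_mem : s ∈ l := (Finset.mem_sort _).2 (by simp [hG])
  have hm_pos : 0 < m := by
    rw [hm, List.length_pos_iff]
    intro h0
    rw [h0] at h0_mem
    simp at h0_mem
  set ts : ℕ → ℝ := fun i => l.getD i t with hts
  have hts_lt : ∀ i, (h : i < m) → ts i = l.get ⟨i, h⟩ := fun i h =>
    List.getD_eq_getElem l t h
  have hts_top : ∀ i, m ≤ i → ts i = t := fun i h => List.getD_eq_default l t h
  have hts0 : ts 0 = 0 := by
    obtain ⟨k, hk⟩ := List.get_of_mem h0_mem
    have h1 : l.get ⟨0, hm_pos⟩ ≤ l.get k := hl_sorted.rel_get_of_le (by simp [Fin.le_def])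
    rw [hk] at h1
    have h2 : 0 ≤ l.get ⟨0, hm_pos⟩ := (hmem_l _ (l.get_mem _)).1
    rw [hts_lt 0 hm_pos]
    exact le_antisymm h1 h2
  have hts_last : ts (m - 1) = s := by
    obtain ⟨k, hk⟩ := List.get_of_mem hs_mem
    have hm1 : m - 1 < m := Nat.sub_lt hm_pos one_pos
    have h1 : l.get k ≤ l.get ⟨m - 1, hm1⟩ := by
      refine hl_sorted.rel_get_of_le ?_
      simp [Fin.le_def]
      omega
    rw [hk] at h1
    have h2 : l.get ⟨m - 1, hm1⟩ ≤ s := (hmem_l _ (l.get_mem _)).2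
    rw [hts_lt (m-1) hm1]
    exact le_antisymm h2 h1
  have hmono : Monotone ts := by
    intro i j hij
    rcases lt_or_ge j m with hj | hj
    · have hi : i < m := lt_of_le_of_lt hij hj
      rw [hts_lt i hi, hts_lt j hj]
      exact hl_sorted.rel_get_of_le (by simp [Fin.le_def]; omega)
    · rw [hts_top j hj]
      rcases lt_or_ge i m with hi | hi
      · rw [hts_lt i hi]
        exact le_trans (hmem_l _ (l.get_mem _)).2 hst
      · rw [hts_top i hi]
  have hiind := hP.2.2.2 x m ts hmono (by rw [hts0])
  set V : Fin m → CPath → ℝ := fun i ω => ω.1 (ts (i.1 + 1)) - ω.1 (ts i.1) with hV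
  have hVmeas : ∀ i, Measurable (V i) := fun i => (measurable_eval _).sub (measurable_eval _)
  set last : Fin m := ⟨m - 1, Nat.sub_lt hm_pos one_pos⟩ with hlast
  set S : Finset (Fin m) := Finset.univ.erase last with hS
  have hdisj : Disjoint S ({last} : Finset (Fin m)) :=
    Finset.disjoint_singleton_right.mpr (Finset.notMem_erase _ _)
  have h1 := iIndepFun.indepFun_finset S {last} hdisj hiind hVmeas
  set X : CPath → ℝ := fun ω => ω.1 t - ω.1 s with hX
  set φ : ({ y // y ∈ S } → ℝ) → (Fin m → ℝ) :=
    fun v k => x + ∑ j : { y // y ∈ S }, if (j.1.1 < k.1) then v j else 0 with hφ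
  have hφmeas : Measurable φ := by
    refine measurable_pi_lambda _ fun k => measurable_const.add ?_
    refine Finset.measurable_sum _ fun j _ => ?_
    by_cases h : (j.1.1 < k.1)
    · simp only [h, if_true]
      exact measurable_pi_apply j
    · simp only [h, if_false]
      exact measurable_const
  set ψ : ({ y // y ∈ ({last} : Finset (Fin m)) } → ℝ) → ℝ :=
    fun v => v ⟨last, Finset.mem_singleton_self last⟩ with hψ
  have hψmeas : Measurable ψ := measurable_pi_apply _
  have h2 := h1.comp hφmeas hψmeas
  have hXeq : (ψ ∘ fun a (i : { y // y ∈ ({last} : Finset (Fin m)) }) => V i.1 a) = X := by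
    funext ω
    have e1 : ts (last.1 + 1) = t := hts_top _ (by show m ≤ m - 1 + 1; omega)
    have e2 : ts last.1 = s := hts_last
    show ω.1 (ts (last.1 + 1)) - ω.1 (ts last.1) = ω.1 t - ω.1 s
    rw [e1, e2]
  rw [hXeq] at h2
  set W : CPath → Fin m → ℝ := fun ω k => ω.1 (ts k.1) with hW
  have hae : (φ ∘ fun a (i : { y // y ∈ S }) => V i.1 a) =ᵐ[P x] W := by
    filter_upwards [hP.2.1 x] with ω hω
    funext k
    show x + ∑ j : { y // y ∈ S }, (if (j.1.1 < k.1) then V j.1 ω else 0) = ω.1 (ts k.1)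
    have e1 : ∑ j : { y // y ∈ S }, (if (j.1.1 < k.1) then V j.1 ω else 0)
        = ∑ j ∈ S, (if (j.1 < k.1) then V j ω else 0) :=
      Finset.sum_coe_sort S (fun j => if (j.1 < k.1) then V j ω else 0)
    have e2 : ∑ j ∈ S, (if (j.1 < k.1) then V j ω else 0)
        = ∑ j : Fin m, (if (j.1 < k.1) then V j ω else 0) := by
      rw [hS]
      refine Finset.sum_erase _ ?_
      have hn : ¬ (last.1 < k.1) := by
        have hk2 := k.2
        show ¬ (m - 1 < k.1)
        omega
      rw [if_neg hn]
    have e3 : ∑ j : Fin m, (if (j.1 < k.1) then V j ω else 0)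
        = ∑ a ∈ Finset.range m,
            (if a < k.1 then (ω.1 (ts (a + 1)) - ω.1 (ts a)) else 0) :=
      Fin.sum_univ_eq_sum_range (fun a => if a < k.1 then (ω.1 (ts (a+1)) - ω.1 (ts a)) else 0) m
    have e4 : ∑ a ∈ Finset.range m,
          (if a < k.1 then (ω.1 (ts (a + 1)) - ω.1 (ts a)) else 0)
        = ∑ a ∈ Finset.range k.1, (ω.1 (ts (a + 1)) - ω.1 (ts a)) := by
      simp_rw [← Finset.mem_range]
      rw [Finset.sum_ite_mem, Finset.inter_eq_right.mpr (Finset.range_subset_range.mpr k.2.le)]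
    have e5 := Finset.sum_range_sub (fun a => ω.1 (ts a)) k.1
    rw [e1, e2, e3, e4, e5, hts0, hω]
    ring
  have h3 : IndepFun W X (P x) := h2.congr hae (Filter.EventuallyEq.refl _ _)
  have h4 : Indep (MeasurableSpace.comap W MeasurableSpace.pi)
      (MeasurableSpace.comap X inferInstance) (P x) := h3
  refine indep_of_indep_of_le_left h4 ?_
  refine iSup_le fun r => iSup_le fun hr => ?_
  have hrl : r ∈ l := (Finset.mem_sort _).2 (by simp [hG, hr])
  obtain ⟨k, hk⟩ := List.get_of_mem hrl
  have heq : (fun ω : CPath => ω.1 r) = (fun v : Fin m → ℝ => v k) ∘ W := by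
    funext ω
    show ω.1 r = ω.1 (ts k.1)
    rw [hts_lt k.1 k.2, hk]
  rw [heq, ← MeasurableSpace.comap_comp]
  exact MeasurableSpace.comap_mono (measurable_pi_apply k).comap_le

lemma indep_sup (P : ℝ → Measure CPath) (hP : IsBrownianMotion P) (x s t : ℝ)
    (hs : 0 ≤ s) (hst : s ≤ t) :
    Indep (⨆ r : Set.Icc (0:ℝ) s,
        MeasurableSpace.comap (fun ω : CPath => ω.1 r.1) inferInstance)
      (MeasurableSpace.comap (fun ω : CPath => ω.1 t - ω.1 s) inferInstance) (P x) := by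
  haveI := hP.1 x
  set mF : {F : Finset ℝ // ∀ r ∈ F, r ∈ Set.Icc (0:ℝ) s} → MeasurableSpace CPath :=
    fun F => ⨆ r ∈ F.1, MeasurableSpace.comap (fun ω : CPath => ω.1 r) inferInstance with hmF
  have h_le : ∀ F, mF F ≤ Subtype.instMeasurableSpace :=
    fun F => iSup_le fun r => iSup_le fun _ => (measurable_eval r).comap_le
  have h_dir : Directed (· ≤ ·) mF := by
    intro F F'
    refine ⟨⟨F.1 ∪ F'.1, fun r hr => (Finset.mem_union.1 hr).elim (F.2 r) (F'.2 r)⟩, ?_, ?_⟩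
    · exact iSup_le fun r => iSup_le fun hr =>
        le_iSup₂_of_le r (Finset.mem_union_left _ hr) le_rfl
    · exact iSup_le fun r => iSup_le fun hr =>
        le_iSup₂_of_le r (Finset.mem_union_right _ hr) le_rfl
  have h_indep : ∀ F, Indep (mF F)
      (MeasurableSpace.comap (fun ω : CPath => ω.1 t - ω.1 s) inferInstance) (P x) :=
    fun F => indep_finset P hP x s t hs hst F.1 F.2
  have h := indep_iSup_of_directed_le h_indep h_le
    ((measurable_eval t).sub (measurable_eval s)).comap_le h_dir
  refine indep_of_indep_of_le_left h ?_
  exact iSup_le fun r => le_iSup_of_le ⟨{r.1}, fun q hq => by rw [Finset.mem_singleton.1 hq]; exact r.2⟩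
    (le_iSup₂_of_le r.1 (Finset.mem_singleton_self _) le_rfl)

end Stmt11Aux

open Stmt11Aux

/-- monotonicity (up to a factor 2) in time of the Feynman–Kac
solution of the parabolic Anderson model with Heaviside initial condition. -/
theorem stmt11 (P : ℝ → Measure {f : ℝ → ℝ // Continuous f}) (hP : IsBrownianMotion P)
    (ξ : ℝ → ℝ) (hξm : Measurable ξ) (hξ0 : ∀ z, 0 ≤ ξ z)
    (K : ℝ) (hξK : ∀ z, ξ z ≤ K)
    (u : ℝ → ℝ → ℝ)
    (hu : ∀ t x, u t x =
      ∫ ω in {ω : {f : ℝ → ℝ // Continuous f} | ω.1 t ≤ 0},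
        Real.exp (∫ r in (0:ℝ)..t, ξ (ω.1 r)) ∂ P x) :
    ∀ x : ℝ, ∀ s t : ℝ, 0 ≤ s → s ≤ t → u s x ≤ 2 * u t x := by
  intro x s t hs hst
  haveI := hP.1 x
  set μ := P x with hμ
  set X : CPath → ℝ := fun ω => ω.1 t - ω.1 s with hX
  have hXm : Measurable X := (measurable_eval t).sub (measurable_eval s)
  have ht0 : 0 ≤ t := hs.trans hst
  have hInt : ∀ (c : ℝ), 0 ≤ c → ∀ ω : CPath,
      IntervalIntegrable (fun r => ξ (ω.1 r)) volume 0 c := by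
    intro c hc ω
    rw [intervalIntegrable_iff_integrableOn_Ioc_of_le hc]
    refine Measure.integrableOn_of_bounded measure_Ioc_lt_top.ne
      ((hξm.comp ω.2.measurable).aestronglyMeasurable) (M := K) ?_
    refine Filter.Eventually.of_forall fun r => ?_
    rw [Real.norm_eq_abs, abs_of_nonneg (hξ0 _)]
    exact hξK _
  set Is : CPath → ℝ := fun ω => ∫ r in (0:ℝ)..s, ξ (ω.1 r) with hIs
  set It : CPath → ℝ := fun ω => ∫ r in (0:ℝ)..t, ξ (ω.1 r) with hIt
  have hIs_le : ∀ ω, Is ω ≤ K * s := by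
    intro ω
    calc Is ω ≤ ∫ _ in (0:ℝ)..s, K :=
          intervalIntegral.integral_mono_on hs (hInt s hs ω)
            intervalIntegrable_const (fun r _ => hξK _)
    _ = K * s := by simp [mul_comm]
  have hIt_le : ∀ ω, It ω ≤ K * t := by
    intro ω
    calc It ω ≤ ∫ _ in (0:ℝ)..t, K :=
          intervalIntegral.integral_mono_on ht0 (hInt t ht0 ω)
            intervalIntegrable_const (fun r _ => hξK _)
    _ = K * t := by simp [mul_comm]
  have hIst : ∀ ω, Is ω ≤ It ω := fun ω =>
    intervalIntegral.integral_mono_interval le_rfl hs hst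
      (Filter.Eventually.of_forall fun r => hξ0 _) (hInt t ht0 ω)
  have hItm : Measurable It :=
    measurable_intFun ht0 (fun r _ => measurable_eval r) hξm
  have h𝓕le : Fs s ≤ Subtype.instMeasurableSpace :=
    iSup_le fun r => (measurable_eval r.1).comap_le
  have hev𝓕 : ∀ r ∈ Set.Icc (0:ℝ) s, Measurable[Fs s] fun ω : CPath => ω.1 r := by
    intro r hr
    exact Measurable.mono (measurable_iff_comap_le.2 le_rfl)
      (le_iSup (fun q : Set.Icc (0:ℝ) s =>
        MeasurableSpace.comap (fun ω : CPath => ω.1 q.1) Real.measurableSpace) ⟨r, hr⟩) le_rfl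
  have hIsm𝓕 : Measurable[Fs s] Is := measurable_intFun hs hev𝓕 hξm
  have hIsm : Measurable Is := hIsm𝓕.mono h𝓕le le_rfl
  set A : Set CPath := {ω : CPath | ω.1 s ≤ 0} with hA
  set B : Set CPath := {ω : CPath | X ω ≤ 0} with hB
  have hAmeas : MeasurableSet A := measurableSet_le (measurable_eval s) measurable_const
  have hA𝓕 : MeasurableSet[Fs s] A := measurableSet_le (hev𝓕 s ⟨hs, le_rfl⟩) measurable_const
  have hBmeas : MeasurableSet B := measurableSet_le hXm measurable_const
  set f : CPath → ℝ := A.indicator (fun ω => Real.exp (Is ω)) with hf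
  set g : CPath → ℝ := B.indicator (fun _ => (1:ℝ)) with hg
  have hf𝓕 : Measurable[Fs s] f := (Real.measurable_exp.comp hIsm𝓕).indicator hA𝓕
  have hfm : Measurable f := hf𝓕.mono h𝓕le le_rfl
  have hBX : MeasurableSet[MeasurableSpace.comap X Real.measurableSpace] B := by
    refine ⟨Set.Iic 0, measurableSet_Iic, ?_⟩
    ext ω
    simp [hB]
  have hgX : Measurable[MeasurableSpace.comap X Real.measurableSpace] g :=
    measurable_const.indicator hBX
  have hgm : Measurable g := hgX.mono hXm.comap_le le_rfl
  have hIndep : Indep (Fs s) (MeasurableSpace.comap X Real.measurableSpace) μ :=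
    indep_sup P hP x s t hs hst
  have hfg : IndepFun f g μ :=
    indep_of_indep_of_le_left (indep_of_indep_of_le_right hIndep hgX.comap_le) hf𝓕.comap_le
  have hf_int : Integrable f μ := by
    refine (integrable_const (Real.exp (K * s))).mono' hfm.aestronglyMeasurable ?_
    refine Filter.Eventually.of_forall fun ω => ?_
    rw [Real.norm_eq_abs, hf]
    by_cases h : ω ∈ A
    · rw [Set.indicator_of_mem h, abs_of_nonneg (Real.exp_pos _).le]
      exact Real.exp_le_exp.2 (hIs_le ω)
    · rw [Set.indicator_of_notMem h, abs_zero]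
      exact (Real.exp_pos _).le
  have hg_int : Integrable g μ := by
    refine (integrable_const (1:ℝ)).mono' hgm.aestronglyMeasurable ?_
    refine Filter.Eventually.of_forall fun ω => ?_
    rw [Real.norm_eq_abs, hg]
    by_cases h : ω ∈ B
    · rw [Set.indicator_of_mem h]
      simp
    · rw [Set.indicator_of_notMem h, abs_zero]
      norm_num
  have hmul := hfg.integral_mul_eq_mul_integral hf_int.aestronglyMeasurable hg_int.aestronglyMeasurable
  have hintf : ∫ ω, f ω ∂μ = u s x := by
    rw [hf, integral_indicator hAmeas, hu s x]
  have hintg : ∫ ω, g ω ∂μ = (μ B).toReal := by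
    rw [hg, integral_indicator_const (1:ℝ) hBmeas]
    simp
    rfl
  have hprod : ∫ ω, (f * g) ω ∂μ = ∫ ω in A ∩ B, Real.exp (Is ω) ∂μ := by
    have heq : (f * g) = (A ∩ B).indicator (fun ω => Real.exp (Is ω) * 1) := by
      funext ω
      rw [Pi.mul_apply, hf, hg, Set.inter_indicator_mul]
    rw [heq, integral_indicator (hAmeas.inter hBmeas)]
    simp
  have hIt_int : Integrable (fun ω => Real.exp (It ω)) μ := by
    refine (integrable_const (Real.exp (K * t))).mono'
      ((Real.measurable_exp.comp hItm).aestronglyMeasurable) ?_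
    refine Filter.Eventually.of_forall fun ω => ?_
    rw [Real.norm_eq_abs, abs_of_nonneg (Real.exp_pos _).le]
    exact Real.exp_le_exp.2 (hIt_le ω)
  have hIs_int : Integrable (fun ω => Real.exp (Is ω)) μ := by
    refine (integrable_const (Real.exp (K * s))).mono'
      ((Real.measurable_exp.comp hIsm).aestronglyMeasurable) ?_
    refine Filter.Eventually.of_forall fun ω => ?_
    rw [Real.norm_eq_abs, abs_of_nonneg (Real.exp_pos _).le]
    exact Real.exp_le_exp.2 (hIs_le ω)
  have hchain : ∫ ω in A ∩ B, Real.exp (Is ω) ∂μ ≤ u t x := by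
    calc ∫ ω in A ∩ B, Real.exp (Is ω) ∂μ
        ≤ ∫ ω in A ∩ B, Real.exp (It ω) ∂μ :=
          setIntegral_mono hIs_int.integrableOn hIt_int.integrableOn
            (fun ω => Real.exp_le_exp.2 (hIst ω))
    _ ≤ ∫ ω in {ω : CPath | ω.1 t ≤ 0}, Real.exp (It ω) ∂μ := by
        refine setIntegral_mono_set hIt_int.integrableOn
          (Filter.Eventually.of_forall fun ω => (Real.exp_pos _).le)
          (HasSubset.Subset.eventuallyLE ?_)
        intro ω hω
        have h1 : ω.1 s ≤ 0 := hω.1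
        have h2 : ω.1 t - ω.1 s ≤ 0 := hω.2
        show ω.1 t ≤ 0
        linarith
    _ = u t x := (hu t x).symm
  -- Gaussian lower bound for μ B
  have hmap := hP.2.2.1 x s t hs hst
  set ν := gaussianReal 0 (Real.toNNReal (t - s)) with hν
  have hμB : μ B = ν (Set.Iic 0) := by
    rw [← hmap, Measure.map_apply hXm measurableSet_Iic]
    rfl
  have hneg : ν.map (fun y : ℝ => -y) = ν := by
    have h := gaussianReal_map_const_mul (μ := 0) (v := Real.toNNReal (t - s)) (-1)
    have h2 : (fun y : ℝ => -y) = fun y : ℝ => (-1) * y := funext fun y => (neg_one_mul y).symm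
    have h3 : (.mk ((-1:ℝ)^2) (sq_nonneg _) : ℝ≥0) = 1 := by ext; norm_num
    rw [h2, hν, h, h3, one_mul]
    norm_num
  have hIic : ν (Set.Iic 0) = ν (Set.Ici 0) := by
    conv_rhs => rw [← hneg]
    rw [Measure.map_apply measurable_neg measurableSet_Ici]
    congr 1
    ext y
    simp
  haveI : IsProbabilityMeasure ν := by rw [hν]; infer_instance
  have h1 : (1:ℝ≥0∞) ≤ ν (Set.Iic 0) + ν (Set.Ici 0) := by
    calc (1:ℝ≥0∞) = ν Set.univ := measure_univ.symm
    _ = ν (Set.Iic 0 ∪ Set.Ici 0) := by rw [Set.Iic_union_Ici]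
    _ ≤ ν (Set.Iic 0) + ν (Set.Ici 0) := measure_union_le _ _
  have h2 : (1/2 : ℝ≥0∞) ≤ ν (Set.Iic 0) := by
    rw [← hIic] at h1
    by_contra hlt
    push_neg at hlt
    have h3 := ENNReal.add_lt_add hlt hlt
    rw [ENNReal.add_halves] at h3
    exact absurd h1 (not_le.2 h3)
  have hB_half : (1/2 : ℝ) ≤ (μ B).toReal := by
    rw [hμB]
    have := ENNReal.toReal_mono (measure_ne_top ν _) h2
    simpa using this
  have husx : 0 ≤ u s x := by
    rw [hu s x]
    exact setIntegral_nonneg hAmeas fun ω _ => (Real.exp_pos _).le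
  have hkey : u s x * (μ B).toReal ≤ u t x := by
    calc u s x * (μ B).toReal = ∫ ω, (f * g) ω ∂μ := by rw [← hintf, ← hintg]; exact hmul.symm
    _ = ∫ ω in A ∩ B, Real.exp (Is ω) ∂μ := hprod
    _ ≤ u t x := hchain
  have hfinal : u s x * (1/2) ≤ u s x * (μ B).toReal :=
    mul_le_mul_of_nonneg_left hB_half husx
  linarith
end
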